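/- Let p ⊆ Z^2 be finite and nonempty such that each row section {x : (x,y) ∈ p} and each column section {y : (x,y) ∈ p} is an interval, and such that for any two consecutive nonempty rows the corresponding intervals intersect, and the set of nonempty rows forms an interval of Z. Then p is 4-connected. -/

import Mathlib

def Adj (a b : ℤ × ℤ) : Prop := (a.1 - b.1).natAbs + (a.2 - b.2).natAbs = 1

def FourConnected (p : Set (ℤ × ℤ)) : Prop :=
  ∀ c1 ∈ p, ∀ c2 ∈ p, ∃ l : List (ℤ × ℤ),
    l.head? = some c1 ∧ l.getLast? = some c2 ∧ (∀ c ∈ l, c ∈ p) ∧ l.Chain' Adj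

def HConvex (p : Set (ℤ × ℤ)) : Prop :=
  ∀ x1 x2 x3 y : ℤ, x1 ≤ x2 → x2 ≤ x3 → (x1, y) ∈ p → (x3, y) ∈ p → (x2, y) ∈ p

def VConvex (p : Set (ℤ × ℤ)) : Prop :=
  ∀ x y1 y2 y3 : ℤ, y1 ≤ y2 → y2 ≤ y3 → (x, y1) ∈ p → (x, y3) ∈ p → (x, y2) ∈ p

def HSeg (p : Set (ℤ × ℤ)) (x1 x2 y : ℤ) : Prop :=
  ∀ x : ℤ, min x1 x2 ≤ x → x ≤ max x1 x2 → (x, y) ∈ p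

def VSeg (p : Set (ℤ × ℤ)) (x y1 y2 : ℤ) : Prop :=
  ∀ y : ℤ, min y1 y2 ≤ y → y ≤ max y1 y2 → (x, y) ∈ p

/-- An inner path from `c1` to `c2` changing direction at most once:
either a horizontal segment followed by a vertical one, or vice versa,
entirely contained in `p`. -/
def LPath (p : Set (ℤ × ℤ)) (c1 c2 : ℤ × ℤ) : Prop :=
  (HSeg p c1.1 c2.1 c1.2 ∧ VSeg p c2.1 c1.2 c2.2) ∨
  (VSeg p c1.1 c1.2 c2.2 ∧ HSeg p c1.1 c2.1 c2.2)

def LConvex (p : Set (ℤ × ℤ)) : Prop := ∀ c1 ∈ p, ∀ c2 ∈ p, LPath p c1 c2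

def NECorner (p : Set (ℤ × ℤ)) (x y : ℤ) : Prop :=
  (x, y) ∈ p ∧ (x + 1, y) ∉ p ∧ (x, y + 1) ∉ p

def NWCorner (p : Set (ℤ × ℤ)) (x y : ℤ) : Prop :=
  (x, y) ∈ p ∧ (x - 1, y) ∉ p ∧ (x, y + 1) ∉ p

def Corner (p : Set (ℤ × ℤ)) (x y : ℤ) : Prop :=
  (x, y) ∈ p ∧
    (((x, y + 1) ∉ p ∧ (x + 1, y) ∉ p) ∨ ((x + 1, y) ∉ p ∧ (x, y - 1) ∉ p) ∨
      ((x, y - 1) ∉ p ∧ (x - 1, y) ∉ p) ∨ ((x - 1, y) ∉ p ∧ (x, y + 1) ∉ p))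


def Step (p : Set (ℤ × ℤ)) (a b : ℤ × ℤ) : Prop := a ∈ p ∧ b ∈ p ∧ Adj a b

lemma adj_symm {a b : ℤ × ℤ} (h : Adj a b) : Adj b a := by
  unfold Adj at *
  omega

lemma rtg_path {p : Set (ℤ × ℤ)} {a b : ℤ × ℤ} (ha : a ∈ p)
    (h : Relation.ReflTransGen (Step p) a b) :
    ∃ l : List (ℤ × ℤ), l.head? = some a ∧ l.getLast? = some b ∧
      (∀ c ∈ l, c ∈ p) ∧ l.Chain' Adj := by
  induction h with
  | refl => exact ⟨[a], rfl, rfl, by simpa using ha, List.isChain_singleton a⟩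
  | tail _ hstep ih =>
    obtain ⟨l, hh, hl, hmem, hch⟩ := ih
    rename_i b c _
    refine ⟨l ++ [c], ?_, ?_, ?_, ?_⟩
    · cases l with
      | nil => simp at hh
      | cons x xs => simpa using hh
    · simp
    · intro d hd
      rcases List.mem_append.1 hd with h1 | h1
      · exact hmem d h1
      · simp at h1; subst h1; exact hstep.2.1
    · apply List.IsChain.append hch (by simp)
      intro x hx y hy
      simp at hy; subst hy
      have : x = b := by rw [hl] at hx; exact (by simpa using hx : b = x).symm
      subst this
      exact hstep.2.2

lemma rtg_hconn {p : Set (ℤ × ℤ)} (hH : HConvex p) (y : ℤ) :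
    ∀ x1 x2 : ℤ, (x1, y) ∈ p → (x2, y) ∈ p →
      Relation.ReflTransGen (Step p) (x1, y) (x2, y) := by
  have key : ∀ n : ℕ, ∀ x1 x2 : ℤ, x2 - x1 = n → (x1, y) ∈ p → (x2, y) ∈ p →
      Relation.ReflTransGen (Step p) (x1, y) (x2, y) := by
    intro n
    induction n with
    | zero => intro x1 x2 h _ _; have : x1 = x2 := by omega
              subst this; exact Relation.ReflTransGen.refl
    | succ k ih =>
      intro x1 x2 h h1 h2
      have hx : (x1 + 1, y) ∈ p := hH x1 (x1 + 1) x2 y (by omega) (by omega) h1 h2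
      have step1 : Step p (x1, y) (x1 + 1, y) := ⟨h1, hx, by simp [Adj]⟩
      exact Relation.ReflTransGen.head step1 (ih (x1 + 1) x2 (by omega) hx h2)
  intro x1 x2 h1 h2
  rcases le_total x1 x2 with h | h
  · exact key (x2 - x1).toNat x1 x2 (by omega) h1 h2
  · have := key (x1 - x2).toNat x2 x1 (by omega) h2 h1
    exact (@Relation.ReflTransGen.symmetric _ _
      ⟨fun a b hab => ⟨hab.2.1, hab.1, adj_symm hab.2.2⟩⟩).symm _ _ this

lemma rtg_main {p : Set (ℤ × ℤ)}
    (hH : HConvex p)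
    (hadj : ∀ y : ℤ, (∃ x : ℤ, (x, y) ∈ p) → (∃ x : ℤ, (x, y + 1) ∈ p) →
      ∃ x : ℤ, (x, y) ∈ p ∧ (x, y + 1) ∈ p)
    (hrows : ∀ y1 y2 y3 : ℤ, y1 ≤ y2 → y2 ≤ y3 →
      (∃ x : ℤ, (x, y1) ∈ p) → (∃ x : ℤ, (x, y3) ∈ p) → ∃ x : ℤ, (x, y2) ∈ p) :
    ∀ c1 ∈ p, ∀ c2 ∈ p, Relation.ReflTransGen (Step p) c1 c2 := by
  have key : ∀ n : ℕ, ∀ x1 y1 x2 y2 : ℤ, y2 - y1 = n → (x1, y1) ∈ p → (x2, y2) ∈ p →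
      Relation.ReflTransGen (Step p) (x1, y1) (x2, y2) := by
    intro n
    induction n with
    | zero => intro x1 y1 x2 y2 h h1 h2
              have : y1 = y2 := by omega
              subst this; exact rtg_hconn hH y1 x1 x2 h1 h2
    | succ k ih =>
      intro x1 y1 x2 y2 h h1 h2
      have hrow : ∃ x : ℤ, (x, y1 + 1) ∈ p :=
        hrows y1 (y1 + 1) y2 (by omega) (by omega) ⟨x1, h1⟩ ⟨x2, h2⟩
      obtain ⟨x, hx1, hx2⟩ := hadj y1 ⟨x1, h1⟩ hrow
      have t1 := rtg_hconn hH y1 x1 x h1 hx1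
      have step1 : Step p (x, y1) (x, y1 + 1) := ⟨hx1, hx2, by simp [Adj]⟩
      have t2 := ih x (y1 + 1) x2 y2 (by omega) hx2 h2
      exact (t1.tail step1).trans t2
  intro c1 h1 c2 h2
  obtain ⟨x1, y1⟩ := c1; obtain ⟨x2, y2⟩ := c2
  rcases le_total y1 y2 with h | h
  · exact key (y2 - y1).toNat x1 y1 x2 y2 (by omega) h1 h2
  · exact (@Relation.ReflTransGen.symmetric _ _
      ⟨fun a b hab => ⟨hab.2.1, hab.1, adj_symm hab.2.2⟩⟩).symm _ _
      (key (y1 - y2).toNat x2 y2 x1 y1 (by omega) h2 h1)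

/-- interval rows and columns, overlapping consecutive rows and an interval
of nonempty rows imply 4-connectedness. -/
theorem intervals_imp_fourConnected (p : Set (ℤ × ℤ)) (hfin : p.Finite) (hne : p.Nonempty)
    (hH : HConvex p) (hV : VConvex p)
    (hadj : ∀ y : ℤ, (∃ x : ℤ, (x, y) ∈ p) → (∃ x : ℤ, (x, y + 1) ∈ p) →
      ∃ x : ℤ, (x, y) ∈ p ∧ (x, y + 1) ∈ p)
    (hrows : ∀ y1 y2 y3 : ℤ, y1 ≤ y2 → y2 ≤ y3 →
      (∃ x : ℤ, (x, y1) ∈ p) → (∃ x : ℤ, (x, y3) ∈ p) → ∃ x : ℤ, (x, y2) ∈ p) :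
    FourConnected p := by
  intro c1 h1 c2 h2
  exact rtg_path h1 (rtg_main hH hadj hrows c1 h1 c2 h2)
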